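/- Fix ω ∈ Ω and λ₁ ∈ ℝ, and assume: (a) there exists a nonzero v₁ ∈ ℝ^k such that lim_{n→∞}(1/n) log ‖v₁ A^{(n)}(ω)‖₁ exists and equals λ₁; and (b) for every w ∈ ℝ^k, limsup_{n→∞}(1/n) log ‖w A^{(n)}(ω)‖₁ ≤ λ₁. Then the topological entropy at ω equals λ₁, i.e. lim_{n→∞}(1/n) log |𝓒_n(ω)| exists and equals λ₁. -/

import Mathlib

open MeasureTheory Filter Topology
open scoped Classical

/-- The matrix cocycle: `matIter θ A n ω = A(ω)A(θω)⋯A(θ^{n-1}ω)` (with `matIter θ A 0 ω = 1`). -/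
noncomputable def matIter {Ω : Type*} {k : ℕ} (θ : Ω → Ω)
    (A : Ω → Matrix (Fin k) (Fin k) ℝ) : ℕ → Ω → Matrix (Fin k) (Fin k) ℝ
  | 0, _ => 1
  | n + 1, ω => A ω * matIter θ A n (θ ω)

/-- The ℓ¹ norm of a row vector: `‖v‖₁ = Σᵢ |vᵢ|`. -/
noncomputable def l1norm {k : ℕ} (v : Fin k → ℝ) : ℝ := ∑ i, |v i|

/-- The number of `n`-cylinders. -/
noncomputable def cylCount {Ω : Type*} {k : ℕ} (θ : Ω → Ω)
    (A : Ω → Matrix (Fin k) (Fin k) ℝ) (n : ℕ) (ω : Ω) : ℕ :=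
  Set.ncard {x : Fin n → Fin k |
    ∀ (i : ℕ) (hi : i + 1 < n),
      A (θ^[i] ω) (x ⟨i, Nat.lt_of_succ_lt hi⟩) (x ⟨i + 1, hi⟩) = 1}

section aux
variable {Ω : Type*} {k : ℕ} (θ : Ω → Ω) (A : Ω → Matrix (Fin k) (Fin k) ℝ)

lemma matIter_add (n m : ℕ) (ω : Ω) :
    matIter θ A (n + m) ω = matIter θ A n ω * matIter θ A m (θ^[n] ω) := by
  induction n generalizing ω with
  | zero => simp [matIter]
  | succ n ih =>
    rw [show n + 1 + m = (n + m) + 1 from by ring]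
    show A ω * matIter θ A (n + m) (θ ω) = (A ω * matIter θ A n (θ ω)) * _
    rw [ih, mul_assoc, Function.iterate_succ_apply]

/-- Fin-indexed admissibility. -/
def adm (n : ℕ) (ω : Ω) (x : Fin (n+1) → Fin k) : Prop :=
  ∀ m : Fin n, A (θ^[(m : ℕ)] ω) (x m.castSucc) (x m.succ) = 1

lemma adm_iff (n : ℕ) (ω : Ω) (x : Fin (n+1) → Fin k) :
    adm θ A n ω x ↔
      ∀ (m : ℕ) (hm : m + 1 < n + 1),
        A (θ^[m] ω) (x ⟨m, Nat.lt_of_succ_lt hm⟩) (x ⟨m+1, hm⟩) = 1 := by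
  constructor
  · intro h m hm
    have := h ⟨m, by omega⟩
    convert this using 3 <;> exact Fin.ext rfl
  · intro h m
    have := h (m : ℕ) (by omega)
    convert this using 3 <;> exact Fin.ext rfl

lemma adm_cons (n : ℕ) (ω : Ω) (a : Fin k) (y : Fin (n+1) → Fin k) :
    adm θ A (n+1) ω (Fin.cons a y) ↔ (A ω a (y 0) = 1 ∧ adm θ A n (θ ω) y) := by
  constructor
  · intro h
    constructor
    · have := h 0
      simpa using this
    · intro m
      have := h m.succ
      rw [← Fin.succ_castSucc, Fin.cons_succ, Fin.cons_succ] at this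
      simpa [Function.iterate_succ_apply] using this
  · rintro ⟨h0, hy⟩ m
    induction m using Fin.cases with
    | zero => simpa using h0
    | succ p =>
      rw [← Fin.succ_castSucc, Fin.cons_succ, Fin.cons_succ]
      simpa [Function.iterate_succ_apply] using hy p

/-- admissible paths of length `n+1` from `i` to `j`. -/
noncomputable def pathSet (n : ℕ) (ω : Ω) (i j : Fin k) : Finset (Fin (n+1) → Fin k) :=
  Finset.univ.filter (fun x => x 0 = i ∧ x (Fin.last n) = j ∧ adm θ A n ω x)

lemma matIter_entry (h01 : ∀ ω i j, A ω i j = 0 ∨ A ω i j = 1) :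
    ∀ (n : ℕ) (ω : Ω) (i j : Fin k),
      matIter θ A n ω i j = ((pathSet θ A n ω i j).card : ℝ) := by
  intro n
  induction n with
  | zero =>
    intro ω i j
    by_cases hij : i = j
    · subst hij
      have : pathSet θ A 0 ω i i = {fun _ => i} := by
        ext x
        simp only [pathSet, Finset.mem_filter, Finset.mem_univ, true_and,
          Finset.mem_singleton]
        constructor
        · rintro ⟨h0, -, -⟩
          funext t
          obtain ⟨tv, htv⟩ := t
          have : tv = 0 := by omega
          subst this
          rw [Fin.mk_zero, h0]
        · rintro rfl
          exact ⟨rfl, rfl, fun m => Fin.elim0 m⟩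
      rw [this]
      simp [matIter, Matrix.one_apply_eq]
    · have : pathSet θ A 0 ω i j = ∅ := by
        ext x
        simp only [pathSet, Finset.mem_filter, Finset.mem_univ, true_and,
          Finset.notMem_empty, iff_false]
        rintro ⟨h0, h1, -⟩
        exact hij (h0 ▸ h1 ▸ rfl)
      rw [this]
      simp [matIter, Matrix.one_apply_ne hij]
  | succ n ih =>
    intro ω i j
    have hmul : matIter θ A (n+1) ω i j = ∑ l, A ω i l * matIter θ A n (θ ω) l j := by
      show (A ω * matIter θ A n (θ ω)) i j = _
      rw [Matrix.mul_apply]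
    rw [hmul]
    have hfib : (pathSet θ A (n+1) ω i j).card
        = ∑ l : Fin k, ((pathSet θ A (n+1) ω i j).filter (fun x => x 1 = l)).card :=
      Finset.card_eq_sum_card_fiberwise (fun x _ => Finset.mem_univ _)
    rw [hfib]
    push_cast
    refine Finset.sum_congr rfl (fun l _ => ?_)
    rw [ih (θ ω) l j]
    have mem_fiber : ∀ x : Fin (n+2) → Fin k,
        x ∈ (pathSet θ A (n+1) ω i j).filter (fun x => x 1 = l) ↔
          (x 0 = i ∧ x (Fin.last (n+1)) = j ∧ adm θ A (n+1) ω x ∧ x 1 = l) := by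
      intro x
      simp only [pathSet, Finset.mem_filter, Finset.mem_univ, true_and]
      tauto
    rcases h01 ω i l with h0 | h1
    · rw [h0, zero_mul]
      have : ((pathSet θ A (n+1) ω i j).filter (fun x => x 1 = l)) = ∅ := by
        ext x
        rw [mem_fiber]
        simp only [Finset.notMem_empty, iff_false]
        rintro ⟨hx0, -, hadm, hx1⟩
        have h00 := hadm 0
        rw [Fin.castSucc_zero, hx0, Fin.succ_zero_eq_one, hx1] at h00
        simp only [Fin.val_zero, Function.iterate_zero, id] at h00
        rw [h0] at h00
        norm_num at h00
      rw [this, Finset.card_empty, Nat.cast_zero]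
    · rw [h1, one_mul]
      norm_cast
      refine Finset.card_bij' (fun y _ => Fin.cons i y) (fun x _ => Fin.tail x)
        ?_ ?_ ?_ ?_
      · rintro y hy
        simp only [pathSet, Finset.mem_filter, Finset.mem_univ, true_and] at hy
        obtain ⟨hy0, hyl, hadm⟩ := hy
        rw [mem_fiber]
        refine ⟨by simp, ?_, ?_, ?_⟩
        · show Fin.cons (α := fun _ => Fin k) i y (Fin.last (n+1)) = j
          rw [← Fin.succ_last, Fin.cons_succ, hyl]
        · show adm θ A (n+1) ω (Fin.cons (α := fun _ => Fin k) i y)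
          rw [adm_cons]
          exact ⟨by rw [hy0, h1], hadm⟩
        · show Fin.cons (α := fun _ => Fin k) i y 1 = l
          rw [show (1 : Fin (n+2)) = Fin.succ 0 from Fin.ext (by simp), Fin.cons_succ, hy0]
      · rintro x hx
        rw [mem_fiber] at hx
        obtain ⟨hx0, hxl, hadm, hx1⟩ := hx
        have hx' : x = Fin.cons (x 0) (Fin.tail x) := (Fin.cons_self_tail x).symm
        rw [hx'] at hadm
        rw [adm_cons] at hadm
        simp only [pathSet, Finset.mem_filter, Finset.mem_univ, true_and]
        refine ⟨?_, ?_, hadm.2⟩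
        · show x (Fin.succ 0) = l
          rw [Fin.succ_zero_eq_one, hx1]
        · show x (Fin.succ (Fin.last n)) = j
          rw [Fin.succ_last, hxl]
      · rintro y hy
        show Fin.tail (Fin.cons (α := fun _ => Fin k) i y) = y
        funext t
        simp [Fin.tail]
      · rintro x hx
        rw [mem_fiber] at hx
        show Fin.cons (α := fun _ => Fin k) i (Fin.tail x) = x
        rw [← hx.1]
        exact Fin.cons_self_tail x

lemma cylCount_succ (n : ℕ) (ω : Ω) :
    cylCount θ A (n+1) ω = ∑ i : Fin k, ∑ j : Fin k, (pathSet θ A n ω i j).card := by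
  have hset : {x : Fin (n+1) → Fin k |
      ∀ (i : ℕ) (hi : i + 1 < n+1),
        A (θ^[i] ω) (x ⟨i, Nat.lt_of_succ_lt hi⟩) (x ⟨i + 1, hi⟩) = 1}
      = ↑(Finset.univ.filter (fun x : Fin (n+1) → Fin k => adm θ A n ω x)) := by
    ext x
    simp only [Set.mem_setOf_eq, Finset.coe_filter, Finset.mem_univ, true_and]
    exact (adm_iff θ A n ω x).symm
  rw [cylCount, hset, Set.ncard_coe_finset]
  rw [Finset.card_eq_sum_card_fiberwise
    (f := fun x : Fin (n+1) → Fin k => (x 0, x (Fin.last n)))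
    (t := Finset.univ) (fun x _ => Finset.mem_univ _)]
  rw [Fintype.sum_prod_type]
  refine Finset.sum_congr rfl fun i _ => Finset.sum_congr rfl fun j _ => ?_
  congr 1
  ext x
  simp only [Finset.mem_filter, Finset.mem_univ, true_and, pathSet, Prod.mk.injEq]
  tauto

lemma matIter_nonneg (h01 : ∀ ω i j, A ω i j = 0 ∨ A ω i j = 1) (n : ℕ) (ω : Ω) (i j : Fin k) :
    0 ≤ matIter θ A n ω i j := by
  rw [matIter_entry θ A h01 n ω i j]; positivity

lemma cyl_eq_l1 (h01 : ∀ ω i j, A ω i j = 0 ∨ A ω i j = 1) (n : ℕ) (ω : Ω) :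
    ((cylCount θ A (n+1) ω : ℝ))
      = l1norm (Matrix.vecMul (fun _ => (1:ℝ)) (matIter θ A n ω)) := by
  rw [cylCount_succ]
  push_cast
  simp only [l1norm, Matrix.vecMul, dotProduct, one_mul]
  rw [Finset.sum_comm]
  refine Finset.sum_congr rfl fun j _ => ?_
  rw [abs_of_nonneg (Finset.sum_nonneg fun i _ => matIter_nonneg θ A h01 n ω i j)]
  refine Finset.sum_congr rfl fun i _ => ?_
  exact (matIter_entry θ A h01 n ω i j).symm

end aux
section analytic
variable {Ω : Type*} {k : ℕ} (θ : Ω → Ω) (A : Ω → Matrix (Fin k) (Fin k) ℝ)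

lemma l1norm_nonneg {k : ℕ} (v : Fin k → ℝ) : 0 ≤ l1norm v :=
  Finset.sum_nonneg fun i _ => abs_nonneg _

lemma l1norm_eq_zero {k : ℕ} {v : Fin k → ℝ} (h : l1norm v = 0) : v = 0 := by
  funext i
  have := (Finset.sum_eq_zero_iff_of_nonneg (fun i _ => abs_nonneg (v i))).1 h i
    (Finset.mem_univ i)
  simpa using this

lemma abs_le_l1norm {k : ℕ} (v : Fin k → ℝ) (i : Fin k) : |v i| ≤ l1norm v :=
  Finset.single_le_sum (fun i _ => abs_nonneg (v i)) (Finset.mem_univ i)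

lemma l1_vecMul_le (h01 : ∀ ω i j, A ω i j = 0 ∨ A ω i j = 1) (v : Fin k → ℝ) (n : ℕ) (ω : Ω) :
    l1norm (Matrix.vecMul v (matIter θ A n ω))
      ≤ l1norm v * l1norm (Matrix.vecMul (fun _ => (1:ℝ)) (matIter θ A n ω)) := by
  have hM : ∀ i j, 0 ≤ matIter θ A n ω i j := matIter_nonneg θ A h01 n ω
  simp only [l1norm, Matrix.vecMul, dotProduct, one_mul, Finset.mul_sum]
  refine Finset.sum_le_sum fun j _ => ?_
  calc |∑ i, v i * matIter θ A n ω i j|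
      ≤ ∑ i, |v i * matIter θ A n ω i j| := Finset.abs_sum_le_sum_abs _ _
    _ ≤ ∑ i, (∑ i', |v i'|) * matIter θ A n ω i j := by
        refine Finset.sum_le_sum fun i _ => ?_
        rw [abs_mul, abs_of_nonneg (hM i j)]
        exact mul_le_mul_of_nonneg_right (abs_le_l1norm v i) (hM i j)
    _ = (∑ i', |v i'|) * ∑ i, matIter θ A n ω i j := by rw [Finset.mul_sum]
    _ ≤ (∑ i', |v i'|) * |∑ i, matIter θ A n ω i j| := by
        refine mul_le_mul_of_nonneg_left (le_abs_self _) ?_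
        exact Finset.sum_nonneg fun i _ => abs_nonneg _

lemma cylCount_le (n : ℕ) (ω : Ω) : cylCount θ A n ω ≤ k ^ n := by
  have h1 : cylCount θ A n ω ≤ (Set.univ : Set (Fin n → Fin k)).ncard :=
    Set.ncard_le_ncard (Set.subset_univ _) Set.finite_univ
  calc cylCount θ A n ω ≤ (Set.univ : Set (Fin n → Fin k)).ncard := h1
    _ = k ^ n := by
        rw [Set.ncard_univ, Nat.card_eq_fintype_card]
        simp [Fintype.card_fun]

lemma log_cyl_nonneg (n : ℕ) (ω : Ω) : 0 ≤ Real.log (cylCount θ A n ω) :=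
  Real.log_natCast_nonneg _

lemma log_cyl_le (hk : 2 ≤ k) (n : ℕ) (ω : Ω) :
    Real.log (cylCount θ A n ω) ≤ n * Real.log k := by
  have hlogk : 0 ≤ Real.log k := Real.log_nonneg (by exact_mod_cast Nat.one_le_of_lt hk)
  rcases Nat.eq_zero_or_pos (cylCount θ A n ω) with h | h
  · rw [h]
    simp
    positivity
  · have : (cylCount θ A n ω : ℝ) ≤ (k : ℝ) ^ n := by
      exact_mod_cast cylCount_le θ A n ω
    calc Real.log (cylCount θ A n ω) ≤ Real.log ((k:ℝ)^n) :=
          Real.log_le_log (by exact_mod_cast h) this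
      _ = n * Real.log k := by
          rw [Real.log_pow]

end analytic
/-- Fix `ω` and `λ₁ ∈ ℝ` and assume: (a) there is a nonzero `v₁` with
`lim (1/n) log ‖v₁ A^{(n)}(ω)‖₁ = λ₁`, and (b) for every `w`,
`limsup (1/n) log ‖w A^{(n)}(ω)‖₁ ≤ λ₁`.  Then the topological entropy at `ω` equals `λ₁`:
`lim (1/n) log |𝓒_n(ω)|` exists and equals `λ₁`. -/
theorem entropy_eq_top_lyapunov_exponent
    {Ω : Type*} [MeasurableSpace Ω]
    (ℙ : Measure Ω) [IsProbabilityMeasure ℙ]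
    (θ : Ω → Ω) (hθ : MeasurePreserving θ ℙ ℙ) (hθinv : Function.Bijective θ)
    (k : ℕ) (hk : 2 ≤ k)
    (A : Ω → Matrix (Fin k) (Fin k) ℝ)
    (hAmeas : ∀ i j, Measurable fun ω => A ω i j)
    (h01 : ∀ ω i j, A ω i j = 0 ∨ A ω i j = 1)
    (ω : Ω) (lam1 : ℝ)
    (ha : ∃ v₁ : Fin k → ℝ, v₁ ≠ 0 ∧
      Filter.Tendsto
        (fun n : ℕ => (n : ℝ)⁻¹ * Real.log (l1norm (Matrix.vecMul v₁ (matIter θ A n ω))))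
        Filter.atTop (𝓝 lam1))
    (hb : ∀ w : Fin k → ℝ,
      Filter.limsup
        (fun n : ℕ => (n : ℝ)⁻¹ * Real.log (l1norm (Matrix.vecMul w (matIter θ A n ω))))
        Filter.atTop ≤ lam1) :
    Filter.Tendsto
      (fun n : ℕ => (n : ℝ)⁻¹ * Real.log (cylCount θ A n ω))
      Filter.atTop (𝓝 lam1) := by
  obtain ⟨v₁, hv₁ne, hG⟩ := ha
  have hlogk : 0 ≤ Real.log k := Real.log_nonneg (by exact_mod_cast Nat.one_le_of_lt hk)
  set G : ℕ → ℝ :=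
    fun n => (n : ℝ)⁻¹ * Real.log (l1norm (Matrix.vecMul v₁ (matIter θ A n ω))) with hGdef
  set g : ℕ → ℝ := fun n => l1norm (Matrix.vecMul (fun _ => (1:ℝ)) (matIter θ A n ω)) with hgdef
  have hcg : ∀ n : ℕ, ((cylCount θ A (n+1) ω : ℝ)) = g n := fun n => cyl_eq_l1 θ A h01 n ω
  have hbF := hb (fun _ => (1:ℝ))
  have hTnonneg : ∀ n : ℕ, 0 ≤ (n : ℝ)⁻¹ * Real.log (cylCount θ A n ω) := fun n =>
    mul_nonneg (by positivity) (log_cyl_nonneg θ A n ω)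
  rw [tendsto_order]
  constructor
  · -- lower bound
    intro a haa
    by_cases hzero : ∃ n₀, l1norm (Matrix.vecMul v₁ (matIter θ A n₀ ω)) = 0
    · -- then lam1 = 0 and the claim is trivial since the sequence is nonnegative
      obtain ⟨n₀, h0⟩ := hzero
      have hvec0 : Matrix.vecMul v₁ (matIter θ A n₀ ω) = 0 := l1norm_eq_zero h0
      have hev : ∀ m : ℕ, n₀ ≤ m → G m = 0 := by
        intro m hm
        obtain ⟨p, rfl⟩ : ∃ p, m = n₀ + p := ⟨m - n₀, by omega⟩
        have : Matrix.vecMul v₁ (matIter θ A (n₀ + p) ω) = 0 := by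
          rw [matIter_add, ← Matrix.vecMul_vecMul, hvec0, Matrix.zero_vecMul]
        simp only [hGdef, this]
        have : l1norm (0 : Fin k → ℝ) = 0 := by simp [l1norm]
        rw [this, Real.log_zero, mul_zero]
      have hG0 : Filter.Tendsto G Filter.atTop (𝓝 0) := by
        refine Filter.Tendsto.congr' ?_ tendsto_const_nhds
        filter_upwards [Filter.eventually_atTop.2 ⟨n₀, hev⟩] with m hm using hm.symm
      have hlam0 : lam1 = 0 := tendsto_nhds_unique hG hG0
      rw [hlam0] at haa
      exact Filter.Eventually.of_forall fun n => lt_of_lt_of_le haa (hTnonneg n)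
    · push_neg at hzero
      have hpos : ∀ n, 0 < l1norm (Matrix.vecMul v₁ (matIter θ A n ω)) := fun n =>
        lt_of_le_of_ne (l1norm_nonneg _) (Ne.symm (hzero n))
      have hC : 0 < l1norm v₁ := by
        rcases lt_or_eq_of_le (l1norm_nonneg v₁) with h | h
        · exact h
        · exact absurd (l1norm_eq_zero h.symm) hv₁ne
      set C := l1norm v₁ with hCdef
      -- auxiliary sequence h
      set h : ℕ → ℝ :=
        fun m => ((m : ℝ)/((m : ℝ)+1)) * G m - ((m : ℝ)+1)⁻¹ * Real.log C with hhdef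
      have hh : Filter.Tendsto h Filter.atTop (𝓝 lam1) := by
        have t1 : Filter.Tendsto (fun m : ℕ => ((m : ℝ)/((m : ℝ)+1)) * G m)
            Filter.atTop (𝓝 (1 * lam1)) :=
          (tendsto_natCast_div_add_atTop (1:ℝ)).mul hG
        have t2 : Filter.Tendsto (fun m : ℕ => ((m : ℝ)+1)⁻¹ * Real.log C)
            Filter.atTop (𝓝 (0 * Real.log C)) := by
          refine Filter.Tendsto.mul ?_ tendsto_const_nhds
          have := tendsto_one_div_add_atTop_nhds_zero_nat (𝕜 := ℝ)
          simpa [one_div] using this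
        have := t1.sub t2
        simpa using this
      have hevh : ∀ᶠ m in Filter.atTop, a < h m := hh.eventually (eventually_gt_nhds haa)
      obtain ⟨N, hN⟩ := Filter.eventually_atTop.1 hevh
      refine Filter.eventually_atTop.2 ⟨N + 2, fun n hn => ?_⟩
      obtain ⟨m, rfl⟩ : ∃ m, n = m + 1 := ⟨n - 1, by omega⟩
      have hm1 : 1 ≤ m := by omega
      have hmnz : (m : ℝ) ≠ 0 := Nat.cast_ne_zero.mpr (by omega)
      -- key inequality : h m ≤ (m+1)⁻¹ * log (cylCount (m+1))
      have hgpos : 0 < g m := by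
        have hle := l1_vecMul_le θ A h01 v₁ m ω
        have := hpos m
        nlinarith [l1norm_nonneg (Matrix.vecMul (fun _ => (1:ℝ)) (matIter θ A m ω))]
      have hloggm : Real.log (l1norm (Matrix.vecMul v₁ (matIter θ A m ω)))
          ≤ Real.log C + Real.log (g m) := by
        rw [← Real.log_mul (ne_of_gt hC) (ne_of_gt hgpos)]
        exact Real.log_le_log (hpos m) (l1_vecMul_le θ A h01 v₁ m ω)
      have hlogG : Real.log (l1norm (Matrix.vecMul v₁ (matIter θ A m ω))) = (m : ℝ) * G m := by
        rw [hGdef]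
        field_simp
      have hkey : h m ≤ ((m : ℝ)+1)⁻¹ * Real.log (g m) := by
        have h1 : (m : ℝ) * G m - Real.log C ≤ Real.log (g m) := by
          rw [← hlogG]; linarith
        have h2 : h m = ((m : ℝ)+1)⁻¹ * ((m : ℝ) * G m - Real.log C) := by
          rw [hhdef]
          field_simp
        rw [h2]
        refine mul_le_mul_of_nonneg_left h1 (by positivity)
      have hcast : ((m + 1 : ℕ) : ℝ) = (m : ℝ) + 1 := by push_cast; ring
      calc a < h m := hN m (by omega)
        _ ≤ ((m : ℝ)+1)⁻¹ * Real.log (g m) := hkey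
        _ = ((m + 1 : ℕ) : ℝ)⁻¹ * Real.log (cylCount θ A (m+1) ω) := by
            rw [hcast, hcg m]
  · -- upper bound
    intro a haa
    have hgle : ∀ m : ℕ, Real.log (g m) ≤ ((m : ℝ) + 1) * Real.log k := by
      intro m
      rw [← hcg m]
      have := log_cyl_le θ A hk (m+1) ω
      calc Real.log ((cylCount θ A (m+1) ω : ℝ)) ≤ ((m+1 : ℕ) : ℝ) * Real.log k := this
        _ = ((m : ℝ) + 1) * Real.log k := by push_cast; ring
    have hFbdd : Filter.IsBoundedUnder (· ≤ ·) Filter.atTop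
        (fun n : ℕ => (n : ℝ)⁻¹ * Real.log (l1norm
          (Matrix.vecMul (fun _ => (1:ℝ)) (matIter θ A n ω)))) := by
      refine ⟨2 * Real.log k, Filter.eventually_map.2 (Filter.Eventually.of_forall fun m => ?_)⟩
      show (m : ℝ)⁻¹ * Real.log (g m) ≤ 2 * Real.log k
      rcases Nat.eq_zero_or_pos m with rfl | hm
      · rw [Nat.cast_zero, inv_zero, zero_mul]
        positivity
      · have hminv : (0:ℝ) < (m:ℝ) := by exact_mod_cast hm
        calc (m : ℝ)⁻¹ * Real.log (g m) ≤ (m : ℝ)⁻¹ * (((m : ℝ) + 1) * Real.log k) := by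
              refine mul_le_mul_of_nonneg_left (hgle m) (by positivity)
          _ ≤ 2 * Real.log k := by
              rw [inv_mul_le_iff₀ hminv]
              have h1m : (1:ℝ) ≤ (m:ℝ) := by exact_mod_cast hm
              nlinarith [hlogk, h1m]
    have hev : ∀ᶠ m : ℕ in Filter.atTop,
        (m : ℝ)⁻¹ * Real.log (l1norm (Matrix.vecMul (fun _ => (1:ℝ)) (matIter θ A m ω))) < a :=
      Filter.eventually_lt_of_limsup_lt (lt_of_le_of_lt hbF haa) hFbdd
    obtain ⟨N, hN⟩ := Filter.eventually_atTop.1 hev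
    refine Filter.eventually_atTop.2 ⟨N + 2, fun n hn => ?_⟩
    obtain ⟨m, rfl⟩ : ∃ m, n = m + 1 := ⟨n - 1, by omega⟩
    have hm1 : (1:ℝ) ≤ (m:ℝ) := by exact_mod_cast (by omega : 1 ≤ m)
    have hlogg : 0 ≤ Real.log (g m) := by
      rw [← hcg m]; exact log_cyl_nonneg θ A (m+1) ω
    have hstep : ((m+1 : ℕ) : ℝ)⁻¹ * Real.log (cylCount θ A (m+1) ω)
        ≤ (m : ℝ)⁻¹ * Real.log (g m) := by
      rw [hcg m, show ((m+1 : ℕ) : ℝ) = (m:ℝ)+1 from by push_cast; ring]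
      refine mul_le_mul_of_nonneg_right ?_ hlogg
      rw [inv_le_inv₀ (by linarith) (by linarith)]
      linarith
    exact lt_of_le_of_lt hstep (hN m (by omega))
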